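/- Let w_1, w_2 ∈ ℝ^n and X = (1/2)(w_1 w_2ᵀ + w_2 w_1ᵀ). Then the nuclear norm of X (the sum of its singular values, equivalently the sum of the absolute values of its eigenvalues since X is symmetric) equals ‖w_1‖·‖w_2‖. -/

import Mathlib

open scoped BigOperators
open Matrix in

theorem stmt6 {n : ℕ} (w₁ w₂ : Fin n → ℝ)
    (X : Matrix (Fin n) (Fin n) ℝ)
    (hXdef : X = (1 / 2 : ℝ) • (Matrix.vecMulVec w₁ w₂ + Matrix.vecMulVec w₂ w₁))
    (hX : X.IsHermitian) :
    ∑ i, abs (hX.eigenvalues i) =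
      Real.sqrt (∑ i, w₁ i ^ 2) * Real.sqrt (∑ i, w₂ i ^ 2) := by
  classical
  set e : Fin n → ℝ := hX.eigenvalues with he
  set s : ℝ := ∑ i, w₁ i * w₂ i with hs
  set q₁ : ℝ := ∑ i, w₁ i ^ 2 with hq1
  set q₂ : ℝ := ∑ i, w₂ i ^ 2 with hq2
  have hq₁0 : 0 ≤ q₁ := Finset.sum_nonneg fun i _ => sq_nonneg _
  have hq₂0 : 0 ≤ q₂ := Finset.sum_nonneg fun i _ => sq_nonneg _
  set p : ℝ := Real.sqrt q₁ * Real.sqrt q₂ with hp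
  have hp0 : 0 ≤ p := mul_nonneg (Real.sqrt_nonneg _) (Real.sqrt_nonneg _)
  have hp2 : p ^ 2 = q₁ * q₂ := by
    rw [hp, mul_pow, Real.sq_sqrt hq₁0, Real.sq_sqrt hq₂0]
  have hcs : s ^ 2 ≤ p ^ 2 := by
    rw [hp2]; exact Finset.sum_mul_sq_le_sq_mul_sq _ _ _
  -- per-eigenvalue key fact
  have key : ∀ i, e i = 0 ∨ (2 * e i - s) ^ 2 = q₁ * q₂ := by
    intro i
    set v : Fin n → ℝ := ⇑(hX.eigenvectorBasis i) with hv
    have hvne : v ≠ 0 := fun h => hX.eigenvectorBasis.orthonormal.ne_zero i (by ext j; exact congrFun h j)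
    set α : ℝ := w₂ ⬝ᵥ v with hα
    set β : ℝ := w₁ ⬝ᵥ v with hβ
    have hvmv : ∀ a b : Fin n → ℝ, Matrix.vecMulVec a b *ᵥ v = (b ⬝ᵥ v) • a := by
      intro a b
      funext j
      simp only [Matrix.mulVec, dotProduct, Matrix.vecMulVec_apply, Pi.smul_apply,
        smul_eq_mul, Finset.sum_mul]
      exact Finset.sum_congr rfl fun k _ => by ring
    have hE : e i • v = (1 / 2 : ℝ) • (α • w₁ + β • w₂) := by
      rw [← hX.mulVec_eigenvectorBasis i, ← hv, hXdef, Matrix.smul_mulVec,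
        Matrix.add_mulVec, hvmv, hvmv]
    have d11 : w₁ ⬝ᵥ w₁ = q₁ := by simp [dotProduct, hq1, sq]
    have d22 : w₂ ⬝ᵥ w₂ = q₂ := by simp [dotProduct, hq2, sq]
    have d12 : w₁ ⬝ᵥ w₂ = s := rfl
    have d21 : w₂ ⬝ᵥ w₁ = s := by
      simp only [dotProduct, hs]
      exact Finset.sum_congr rfl fun k _ => mul_comm _ _
    have h1 : 2 * e i * β = α * q₁ + β * s := by
      have h := congrArg (fun u => w₁ ⬝ᵥ u) hE
      simp only [dotProduct_smul, dotProduct_add, smul_eq_mul,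
        d11, d12, ← hβ] at h
      linarith
    have h2 : 2 * e i * α = α * s + β * q₂ := by
      have h := congrArg (fun u => w₂ ⬝ᵥ u) hE
      simp only [dotProduct_smul, dotProduct_add, smul_eq_mul,
        d21, d22, ← hα] at h
      linarith
    by_cases hA : α = 0
    · by_cases hB : β = 0
      · left
        have h0 : e i • v = 0 := by rw [hE, hA, hB]; simp
        rcases smul_eq_zero.mp h0 with h | h
        · exact h
        · exact absurd h hvne
      · right
        have h2e : 2 * e i = s := by
          have : β * (2 * e i - s) = 0 := by rw [hA] at h1; linear_combination h1
          rcases mul_eq_zero.mp this with h | h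
          · exact absurd h hB
          · linarith
        have hq2z : q₂ = 0 := by
          rw [hA] at h2
          have : β * q₂ = 0 := by linarith
          rcases mul_eq_zero.mp this with h | h
          · exact absurd h hB
          · exact h
        rw [hq2z]; rw [h2e]; ring
    · by_cases hB : β = 0
      · right
        have h2e : 2 * e i = s := by
          have : α * (2 * e i - s) = 0 := by rw [hB] at h2; linear_combination h2
          rcases mul_eq_zero.mp this with h | h
          · exact absurd h hA
          · linarith
        have hq1z : q₁ = 0 := by
          rw [hB] at h1
          have : α * q₁ = 0 := by linarith
          rcases mul_eq_zero.mp this with h | h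
          · exact absurd h hA
          · exact h
        rw [hq1z]; rw [h2e]; ring
      · right
        have h1' : (2 * e i - s) * β = α * q₁ := by linear_combination h1
        have h2' : (2 * e i - s) * α = β * q₂ := by linear_combination h2
        have hm : ((2 * e i - s) ^ 2 - q₁ * q₂) * (α * β) = 0 := by
          have : ((2 * e i - s) * β) * ((2 * e i - s) * α) = (α * q₁) * (β * q₂) := by
            rw [h1', h2']
          linear_combination this
        rcases mul_eq_zero.mp hm with h | h
        · linarith
        · exact absurd h (mul_ne_zero hA hB)
  -- trace facts
  set U : Matrix (Fin n) (Fin n) ℝ := (hX.eigenvectorUnitary : Matrix (Fin n) (Fin n) ℝ) with hU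
  set D : Matrix (Fin n) (Fin n) ℝ := Matrix.diagonal (RCLike.ofReal ∘ e) with hD
  have hUU : star U * U = 1 := Unitary.coe_star_mul_self _
  have hspec : X = U * D * star U := hX.spectral_theorem
  have t1 : Matrix.trace X = ∑ i, e i := by
    rw [hspec, Matrix.trace_mul_comm, ← Matrix.mul_assoc, hUU, Matrix.one_mul, hD,
      Matrix.trace_diagonal]
    simp
  have t1v : Matrix.trace X = s := by
    rw [hXdef, Matrix.trace_smul, Matrix.trace_add]
    simp only [Matrix.trace, Matrix.diag_apply, Matrix.vecMulVec_apply, smul_eq_mul]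
    rw [← Finset.sum_add_distrib]
    rw [Finset.mul_sum, hs]
    exact Finset.sum_congr rfl fun k _ => by ring
  have hXsq : X * X = U * (D * D) * star U := by
    rw [hspec]
    calc U * D * star U * (U * D * star U) = U * (D * ((star U * U) * (D * star U))) := by
          simp only [Matrix.mul_assoc]
      _ = U * (D * D) * star U := by rw [hUU, Matrix.one_mul]; simp only [Matrix.mul_assoc]
  have t2 : Matrix.trace (X * X) = ∑ i, e i ^ 2 := by
    rw [hXsq, Matrix.trace_mul_comm, ← Matrix.mul_assoc, hUU, Matrix.one_mul, hD,
      Matrix.diagonal_mul_diagonal, Matrix.trace_diagonal]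
    simp [sq]
  have tvv : ∀ a b c d : Fin n → ℝ,
      Matrix.trace (Matrix.vecMulVec a b * Matrix.vecMulVec c d) =
        (∑ i, a i * d i) * (∑ i, b i * c i) := by
    intro a b c d
    simp only [Matrix.trace, Matrix.diag_apply, Matrix.mul_apply, Matrix.vecMulVec_apply]
    rw [Finset.sum_mul_sum]
    exact Finset.sum_congr rfl fun i _ => Finset.sum_congr rfl fun j _ => by ring
  have t2v : Matrix.trace (X * X) = (s ^ 2 + q₁ * q₂) / 2 := by
    rw [hXdef, Matrix.smul_mul, Matrix.mul_smul, Matrix.trace_smul, Matrix.trace_smul,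
      Matrix.add_mul, Matrix.mul_add, Matrix.mul_add, Matrix.trace_add, Matrix.trace_add,
      Matrix.trace_add, tvv, tvv, tvv, tvv]
    have e1 : ∑ i, w₂ i * w₁ i = s := by
      rw [hs]; exact Finset.sum_congr rfl fun k _ => mul_comm _ _
    have e2 : ∑ i, w₁ i * w₁ i = q₁ := by simp [hq1, sq]
    have e3 : ∑ i, w₂ i * w₂ i = q₂ := by simp [hq2, sq]
    rw [e1, e2, e3, ← hs]
    simp only [smul_eq_mul]
    ring
  have sum1 : ∑ i, e i = s := by rw [← t1, t1v]
  have sum2 : ∑ i, e i ^ 2 = (s ^ 2 + q₁ * q₂) / 2 := by rw [← t2, t2v]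
  rcases eq_or_lt_of_le hp0 with hpz | hppos
  · -- p = 0
    have hq : q₁ * q₂ = 0 := by rw [← hp2, ← hpz]; ring
    have hs0 : s = 0 := by nlinarith
    have ht2 : ∑ i, e i ^ 2 = 0 := by rw [sum2, hq, hs0]; ring
    have hall : ∀ i ∈ Finset.univ, e i ^ 2 = 0 :=
      (Finset.sum_eq_zero_iff_of_nonneg fun i _ => sq_nonneg _).mp ht2
    rw [← hpz]
    apply Finset.sum_eq_zero
    intro i hi
    have := pow_eq_zero_iff (n := 2) (by norm_num) |>.mp (hall i hi)
    simp [this]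
  · -- p > 0
    have hnegp : -p ≤ s ∧ s ≤ p := by constructor <;> nlinarith
    have habs : ∀ i, |e i| * p = 2 * e i ^ 2 - s * e i := by
      intro i
      rcases key i with h0 | h
      · simp [h0]
      · have hsq : (2 * e i - s) ^ 2 = p ^ 2 := by rw [h, hp2]
        have h' : 2 * e i - s = p ∨ 2 * e i - s = -p := sq_eq_sq_iff_eq_or_eq_neg.mp hsq
        rcases h' with h' | h'
        · have he0 : 0 ≤ e i := by linarith [hnegp.1]
          rw [abs_of_nonneg he0]
          linear_combination (-(e i)) * h'
        · have he0 : e i ≤ 0 := by linarith [hnegp.2]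
          rw [abs_of_nonpos he0]
          linear_combination (-(e i)) * h'
    have hsum : (∑ i, |e i|) * p = p ^ 2 := by
      rw [Finset.sum_mul]
      calc ∑ i, |e i| * p = ∑ i, (2 * e i ^ 2 - s * e i) :=
            Finset.sum_congr rfl fun i _ => habs i
        _ = 2 * (∑ i, e i ^ 2) - s * (∑ i, e i) := by
            rw [Finset.sum_sub_distrib, Finset.mul_sum, Finset.mul_sum]
        _ = p ^ 2 := by rw [sum1, sum2, hp2]; ring
    have := mul_right_cancel₀ (ne_of_gt hppos) (by rw [hsum, sq] : (∑ i, |e i|) * p = p * p)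
    exact this
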